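/- Among all probability distributions on a finite product space having prescribed marginals on subsets A_1,...,A_r, any distribution of the product form Q(x) = ∏_k f_k(x_{A_k}) satisfying those marginal constraints achieves the maximum entropy: for any other distribution P with the same marginals, S[P] ≤ S[Q], with equality iff P = Q. -/

import Mathlib

open Finset

/-- Shannon entropy (base 2). -/
noncomputable def H {α : Type*} [Fintype α] (p : α → ℝ) : ℝ :=
  -∑ x, p x * Real.logb 2 (p x)

/-- Marginal of `P` on the set of coordinates `A`. -/
noncomputable def margA {M : ℕ} {X : Fin M → Type*} [∀ i, Fintype (X i)]
    [∀ i, DecidableEq (X i)] (P : (∀ i, X i) → ℝ) (A : Finset (Fin M))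
    (z : ∀ i, X i) : ℝ :=
  ∑ y, if (∀ i ∈ A, y i = z i) then P y else 0

lemma card_fiber_const {M : ℕ} {X : Fin M → Type*} [∀ i, Fintype (X i)]
    [∀ i, DecidableEq (X i)] (A : Finset (Fin M)) (y y' : ∀ i, X i) :
    (univ.filter fun z : ∀ i, X i => ∀ i ∈ A, y i = z i).card
      = (univ.filter fun z : ∀ i, X i => ∀ i ∈ A, y' i = z i).card := by
  apply Finset.card_bij' (fun z _ => fun j => if j ∈ A then y' j else z j)
    (fun w _ => fun j => if j ∈ A then y j else w j)
  · intro a ha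
    simp only [mem_filter, mem_univ, true_and] at *
    intro i hi; simp [hi]
  · intro a ha
    simp only [mem_filter, mem_univ, true_and] at *
    intro i hi; simp [hi]
  · intro a ha
    simp only [mem_filter, mem_univ, true_and] at ha
    funext j; by_cases hj : j ∈ A
    · simp [hj, (ha j hj).symm]
    · simp [hj]
  · intro a ha
    simp only [mem_filter, mem_univ, true_and] at ha
    funext j; by_cases hj : j ∈ A
    · simp [hj, (ha j hj).symm]
    · simp [hj]

lemma marg_transfer {M : ℕ} {X : Fin M → Type*} [∀ i, Fintype (X i)]
    [∀ i, DecidableEq (X i)] [Nonempty (∀ i, X i)]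
    (P Q : (∀ i, X i) → ℝ) (A : Finset (Fin M))
    (hm : ∀ z, margA P A z = margA Q A z) (h : (∀ i, X i) → ℝ)
    (hh : ∀ x y, (∀ i ∈ A, x i = y i) → h x = h y) :
    ∑ x, P x * h x = ∑ x, Q x * h x := by
  classical
  set y₀ : ∀ i, X i := Classical.arbitrary _ with hy₀
  set c : ℕ := (univ.filter fun z : ∀ i, X i => ∀ i ∈ A, y₀ i = z i).card with hc
  have hcpos : 0 < c := by
    rw [hc]
    apply Finset.card_pos.2
    exact ⟨y₀, by simp⟩
  have expand : ∀ R : (∀ i, X i) → ℝ,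
      ∑ z, margA R A z * h z = (c : ℝ) * ∑ y, R y * h y := by
    intro R
    simp only [margA, Finset.sum_mul]
    rw [Finset.sum_comm, Finset.mul_sum]
    apply Finset.sum_congr rfl
    intro y _
    calc ∑ z : ∀ i, X i, (if (∀ i ∈ A, y i = z i) then R y else 0) * h z
        = ∑ z : ∀ i, X i, (if (∀ i ∈ A, y i = z i) then R y * h y else 0) := by
          apply Finset.sum_congr rfl; intro z _
          by_cases hz : ∀ i ∈ A, y i = z i
          · simp [hz, hh y z hz]
          · simp [hz]
      _ = ((univ.filter fun z : ∀ i, X i => ∀ i ∈ A, y i = z i).card : ℝ) * (R y * h y) := by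
          rw [← Finset.sum_filter, Finset.sum_const, nsmul_eq_mul]
      _ = (c : ℝ) * (R y * h y) := by rw [card_fiber_const A y y₀]
  have := expand P
  rw [Finset.sum_congr rfl (fun z _ => by rw [hm z]), expand Q] at this
  have hcne : (c : ℝ) ≠ 0 := Nat.cast_ne_zero.mpr hcpos.ne'
  exact (mul_left_cancel₀ hcne this).symm

/-- A product-form distribution `Q(x) = ∏_k f_k(x_{A_k})` satisfying the
marginal constraints maximizes entropy among all distributions `P` with the
same marginals on the `A_k`: `S[P] ≤ S[Q]`, with equality iff `P = Q`. -/
theorem stmt_4 {M r : ℕ} {X : Fin M → Type*} [∀ i, Fintype (X i)]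
    [∀ i, DecidableEq (X i)]
    (Q : (∀ i, X i) → ℝ) (hQ0 : ∀ x, 0 ≤ Q x) (hQ1 : ∑ x, Q x = 1)
    (A : Fin r → Finset (Fin M)) (f : Fin r → (∀ i, X i) → ℝ)
    (hf0 : ∀ k x, 0 ≤ f k x)
    (hfloc : ∀ k x y, (∀ i ∈ A k, x i = y i) → f k x = f k y)
    (hQprod : ∀ x, Q x = ∏ k, f k x)
    (P : (∀ i, X i) → ℝ) (hP0 : ∀ x, 0 ≤ P x) (hP1 : ∑ x, P x = 1)
    (hmarg : ∀ k z, margA P (A k) z = margA Q (A k) z)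
    (hac : ∀ x, 0 < P x → 0 < Q x) :
    H P ≤ H Q ∧ (H P = H Q ↔ P = Q) := by
  classical
  have hne : Nonempty (∀ i, X i) := by
    by_contra hne
    rw [not_nonempty_iff] at hne
    simp at hP1
  -- split of logb Q into sum over k, weighted by any distribution abs. cont. wrt Q
  have split : ∀ R : (∀ i, X i) → ℝ, (∀ x, 0 ≤ R x) → (∀ x, 0 < R x → 0 < Q x) →
      ∑ x, R x * Real.logb 2 (Q x) = ∑ k, ∑ x, R x * Real.logb 2 (f k x) := by
    intro R hR0 hRQ
    rw [Finset.sum_comm]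
    apply Finset.sum_congr rfl
    intro x _
    rcases eq_or_lt_of_le (hR0 x) with h0 | hp
    · simp [← h0]
    · have hQx := hRQ x hp
      have hfne : ∀ k ∈ (univ : Finset (Fin r)), f k x ≠ 0 := by
        intro k _ hk
        rw [hQprod x, Finset.prod_eq_zero (mem_univ k) hk] at hQx
        exact lt_irrefl 0 hQx
      rw [hQprod x, Real.logb_prod _ _ hfne, Finset.mul_sum]
  have hPQlog : ∑ x, P x * Real.logb 2 (Q x) = ∑ x, Q x * Real.logb 2 (Q x) := by
    rw [split P hP0 hac, split Q hQ0 (fun x h => h)]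
    apply Finset.sum_congr rfl
    intro k _
    exact marg_transfer P Q (A k) (hmarg k) (fun x => Real.logb 2 (f k x))
      (fun x y hxy => by rw [hfloc k x y hxy])
  set T : (∀ i, X i) → ℝ :=
    fun x => P x * (Real.log (P x) - Real.log (Q x)) - (P x - Q x) with hT
  have hterm : ∀ x, 0 ≤ T x := by
    intro x
    rcases eq_or_lt_of_le (hP0 x) with h0 | hp
    · simp [hT, ← h0, hQ0 x]
    · have hq := hac x hp
      have hle := Real.log_le_sub_one_of_pos (div_pos hq hp)
      rw [Real.log_div hq.ne' hp.ne'] at hle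
      have h2 : P x * (Real.log (Q x) - Real.log (P x)) ≤ P x * (Q x / P x - 1) :=
        mul_le_mul_of_nonneg_left hle hp.le
      have h3 : P x * (Q x / P x) = Q x := by field_simp
      simp only [hT]; nlinarith
  have hstrict : ∀ x, P x ≠ Q x → 0 < T x := by
    intro x hxne
    rcases eq_or_lt_of_le (hP0 x) with h0 | hp
    · have hq0 : Q x ≠ 0 := fun h => hxne (by rw [← h0, h])
      have : 0 < Q x := lt_of_le_of_ne (hQ0 x) (Ne.symm hq0)
      simp [hT, ← h0, this]
    · have hq := hac x hp
      have hne1 : Q x / P x ≠ 1 := by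
        intro h
        exact hxne ((div_eq_one_iff_eq hp.ne').mp h).symm
      have hlt := Real.log_lt_sub_one_of_pos (div_pos hq hp) hne1
      rw [Real.log_div hq.ne' hp.ne'] at hlt
      have h2 : P x * (Real.log (Q x) - Real.log (P x)) < P x * (Q x / P x - 1) :=
        (mul_lt_mul_iff_right₀ hp).mpr hlt
      have h3 : P x * (Q x / P x) = Q x := by field_simp
      simp only [hT]; nlinarith
  have hD0 : 0 ≤ ∑ x, T x := Finset.sum_nonneg fun x _ => hterm x
  have hsumPQ : ∑ x, (P x - Q x) = 0 := by
    rw [Finset.sum_sub_distrib, hP1, hQ1, sub_self]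
  have hlog2 : (0:ℝ) < Real.log 2 := Real.log_pos one_lt_two
  have hdiff : H Q - H P = (∑ x, T x) / Real.log 2 := by
    have hTsum : ∑ x, T x = ∑ x, P x * (Real.log (P x) - Real.log (Q x)) := by
      simp only [hT]
      rw [Finset.sum_sub_distrib, Finset.sum_sub_distrib, hP1, hQ1]; ring
    have e1 : H Q - H P
        = ∑ x, P x * Real.logb 2 (P x) - ∑ x, P x * Real.logb 2 (Q x) := by
      simp only [H]
      rw [← hPQlog]
      ring
    rw [e1, hTsum, Finset.sum_div, ← Finset.sum_sub_distrib]
    apply Finset.sum_congr rfl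
    intro x _
    simp only [Real.logb]
    ring
  constructor
  · have := div_nonneg hD0 hlog2.le
    linarith
  · constructor
    · intro hEq
      have hz : (∑ x, T x) / Real.log 2 = 0 := by rw [← hdiff, hEq]; ring
      have hDz : ∑ x, T x = 0 := by
        rcases div_eq_zero_iff.mp hz with h | h
        · exact h
        · exact absurd h hlog2.ne'
      funext x
      by_contra hne2
      have h1 := hstrict x hne2
      have h2 : T x = 0 :=
        (Finset.sum_eq_zero_iff_of_nonneg (fun y _ => hterm y)).mp hDz x (mem_univ x)
      linarith
    · intro h; rw [h]
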